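/- Let g : ℝ → ℝ be a continuous L-periodic function with L > 0, and let α > 0. Then for every interval (e,f) ⊆ (0,1), the integral ∫_e^f g(x/ε^α) dx converges to (f - e) · (1/L) ∫_0^L g(s) ds as ε → 0⁺. -/

import Mathlib

open Set Filter MeasureTheory intervalIntegral

/-- averaging of a continuous `L`-periodic function over a subinterval of `(0,1)`:
`∫_e^f g(x/ε^α) dx → (f-e)·(1/L)∫_0^L g(s) ds` as `ε → 0⁺`. -/
theorem stmt2 (g : ℝ → ℝ) (L α e f : ℝ)
    (hg : Continuous g) (hL : 0 < L) (hper : ∀ y : ℝ, g (y + L) = g y)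
    (hα : 0 < α) (he : 0 ≤ e) (hef : e < f) (hf : f ≤ 1) :
    Tendsto (fun ε : ℝ => ∫ x in e..f, g (x / ε ^ α))
      (nhdsWithin 0 (Ioi 0))
      (nhds ((f - e) * ((1 / L) * ∫ s in (0:ℝ)..L, g s))) := by
  have hgper : Function.Periodic g L := hper
  set I : ℝ := ∫ s in (0:ℝ)..L, g s with hI
  set F : ℝ → ℝ := fun t => ∫ x in (0:ℝ)..t, g x with hF
  have hint : ∀ a b : ℝ, IntervalIntegrable g volume a b := fun a b =>
    hg.intervalIntegrable a b
  have hFcont : Continuous F := intervalIntegral.continuous_primitive hint 0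
  set φ : ℝ → ℝ := fun t => F t - t / L * I with hφ
  have hφcont : Continuous φ := by
    apply hFcont.sub
    exact (continuous_id.div_const L).mul continuous_const
  have hFadd : ∀ t : ℝ, F (t + L) = F t + I := by
    intro t
    have h1 : F t + ∫ x in t..(t + L), g x = F (t + L) :=
      intervalIntegral.integral_add_adjacent_intervals (hint 0 t) (hint t (t + L))
    have h2 : (∫ x in t..(t + L), g x) = I := by
      have := hgper.intervalIntegral_add_eq t 0
      simpa using this
    rw [← h1, h2]
  have hφper : Function.Periodic φ L := by
    intro t
    simp only [hφ, hFadd t]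
    field_simp
    ring
  -- φ is bounded
  obtain ⟨C, hC⟩ : ∃ C : ℝ, ∀ t : ℝ, |φ t| ≤ C := by
    obtain ⟨C, hC⟩ := (isCompact_Icc (a := (0:ℝ)) (b := L)).exists_bound_of_continuousOn
      ((continuous_abs.comp hφcont).continuousOn)
    refine ⟨C, fun t => ?_⟩
    obtain ⟨y, hy, hyeq⟩ := hφper.exists_mem_Ico₀ hL t
    rw [hyeq]
    simpa [Real.norm_eq_abs] using hC y ⟨hy.1, hy.2.le⟩
  have hCnn : 0 ≤ C := le_trans (abs_nonneg _) (hC 0)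
  -- key identity for ε > 0
  have key : ∀ ε : ℝ, ε ∈ Ioi (0:ℝ) →
      (∫ x in e..f, g (x / ε ^ α))
        = (f - e) * ((1 / L) * I) + ε ^ α * (φ (f / ε ^ α) - φ (e / ε ^ α)) := by
    intro ε hε
    have hc : (0:ℝ) < ε ^ α := Real.rpow_pos_of_pos hε α
    have hc' : (ε : ℝ) ^ α ≠ 0 := ne_of_gt hc
    rw [intervalIntegral.integral_comp_div (fun x => g x) hc']
    have hsplit : (∫ x in (e / ε ^ α)..(f / ε ^ α), g x)
        = F (f / ε ^ α) - F (e / ε ^ α) := by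
      have h1 : F (e / ε ^ α) + (∫ x in (e / ε ^ α)..(f / ε ^ α), g x) = F (f / ε ^ α) :=
        intervalIntegral.integral_add_adjacent_intervals (hint _ _) (hint _ _)
      linarith
    rw [hsplit]
    have hFf : F (f / ε ^ α) = φ (f / ε ^ α) + (f / ε ^ α) / L * I := by
      simp [hφ]
    have hFe : F (e / ε ^ α) = φ (e / ε ^ α) + (e / ε ^ α) / L * I := by
      simp [hφ]
    rw [hFf, hFe]
    have hLne : L ≠ 0 := ne_of_gt hL
    rw [smul_eq_mul]
    field_simp
    ring
  -- the error term tends to 0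
  have hrpow : Tendsto (fun ε : ℝ => ε ^ α) (nhdsWithin 0 (Ioi 0)) (nhds 0) := by
    have : ContinuousAt (fun x : ℝ => x ^ α) 0 :=
      Real.continuousAt_rpow_const 0 α (Or.inr hα.le)
    have h0 : (0:ℝ) ^ α = 0 := Real.zero_rpow (ne_of_gt hα)
    simpa [h0] using this.tendsto.mono_left nhdsWithin_le_nhds
  have herr : Tendsto (fun ε : ℝ => ε ^ α * (φ (f / ε ^ α) - φ (e / ε ^ α)))
      (nhdsWithin 0 (Ioi 0)) (nhds 0) := by
    have hbound : ∀ᶠ ε in nhdsWithin (0:ℝ) (Ioi 0),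
        |ε ^ α * (φ (f / ε ^ α) - φ (e / ε ^ α))| ≤ ε ^ α * (2 * C) := by
      filter_upwards [self_mem_nhdsWithin] with ε hε
      have hc : (0:ℝ) < ε ^ α := Real.rpow_pos_of_pos hε α
      rw [abs_mul, abs_of_pos hc]
      apply mul_le_mul_of_nonneg_left _ hc.le
      calc |φ (f / ε ^ α) - φ (e / ε ^ α)|
          ≤ |φ (f / ε ^ α)| + |φ (e / ε ^ α)| := abs_sub _ _
        _ ≤ C + C := add_le_add (hC _) (hC _)
        _ = 2 * C := by ring
    have hub : Tendsto (fun ε : ℝ => ε ^ α * (2 * C)) (nhdsWithin 0 (Ioi 0)) (nhds 0) := by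
      simpa using hrpow.mul_const (2 * C)
    exact squeeze_zero_norm' (by simpa [Real.norm_eq_abs, abs_mul] using hbound) hub
  have hmain : Tendsto (fun ε : ℝ =>
      (f - e) * ((1 / L) * I) + ε ^ α * (φ (f / ε ^ α) - φ (e / ε ^ α)))
      (nhdsWithin 0 (Ioi 0)) (nhds ((f - e) * ((1 / L) * I))) := by
    simpa using (tendsto_const_nhds.add herr :
      Tendsto _ (nhdsWithin (0:ℝ) (Ioi 0)) (nhds ((f - e) * ((1 / L) * I) + 0)))
  exact hmain.congr' (by filter_upwards [self_mem_nhdsWithin] with ε hε using (key ε hε).symm)
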